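/- Let G be a countable group and σ, τ : G → G group endomorphisms. The map Ψ which sends a (σ,τ)-derivation D of ℂ[G] to the function χ_D : G × G → ℂ, χ_D(h, g) = D(g)(h), is a ℂ-linear bijection from the space of (σ,τ)-derivations of ℂ[G] onto the space of locally finite characters, i.e.: (i) for every (σ,τ)-derivation D, the function χ_D is a locally finite character; (ii) every locally finite character arises as χ_D for exactly one (σ,τ)-derivation D. -/

import Mathlib

/-- Extension of a group endomorphism to a ℂ-algebra endomorphism of `ℂ[G]`. -/
noncomputable def algExt {G : Type*} [Group G] (σ : G →* G) :
    MonoidAlgebra ℂ G →ₐ[ℂ] MonoidAlgebra ℂ G :=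
  MonoidAlgebra.mapDomainAlgHom ℂ ℂ σ

/-- A ℂ-linear map `D : ℂ[G] → ℂ[G]` is a `(σ,τ)`-derivation. -/
def IsSigmaTauDerivation {G : Type*} [Group G] (σ τ : G →* G)
    (D : MonoidAlgebra ℂ G →ₗ[ℂ] MonoidAlgebra ℂ G) : Prop :=
  ∀ a b : MonoidAlgebra ℂ G, D (a * b) = D a * algExt τ b + algExt σ a * D b

/-- `χ : G × G → ℂ` is a character (for the groupoid associated with `(σ,τ)`). -/
def IsCharacter {G : Type*} [Group G] (σ τ : G →* G) (χ : G × G → ℂ) : Prop :=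
  ∀ h g₁ g₂ : G, χ (h, g₂ * g₁) = χ (h * (τ g₁)⁻¹, g₂) + χ ((σ g₂)⁻¹ * h, g₁)

/-- A character is locally finite if for every `g` the set `{h | χ(h,g) ≠ 0}` is finite. -/
def IsLocallyFinite {G : Type*} [Group G] (χ : G × G → ℂ) : Prop :=
  ∀ g : G, {h : G | χ (h, g) ≠ 0}.Finite

/-- The map `Ψ` sending a derivation `D` to the function `χ_D(h,g) = D(g)(h)`. -/
noncomputable def chiOf {G : Type*} [Group G]
    (D : MonoidAlgebra ℂ G →ₗ[ℂ] MonoidAlgebra ℂ G) : G × G → ℂ :=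
  fun p => (D (MonoidAlgebra.of ℂ G p.2)).coeff p.1

/- ### Auxiliary lemmas -/

lemma algExt_single {G : Type*} [Group G] (σ : G →* G) (g : G) :
    algExt σ (MonoidAlgebra.single g (1:ℂ)) = MonoidAlgebra.single (σ g) 1 := by
  simp [algExt, MonoidAlgebra.mapDomainAlgHom]

lemma derivation_of_basis {G : Type*} [Group G] (σ τ : G →* G)
    (D : MonoidAlgebra ℂ G →ₗ[ℂ] MonoidAlgebra ℂ G)
    (h : ∀ g₂ g₁ : G,
      D (MonoidAlgebra.single g₂ 1 * MonoidAlgebra.single g₁ 1)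
        = D (MonoidAlgebra.single g₂ 1) * algExt τ (MonoidAlgebra.single g₁ 1)
          + algExt σ (MonoidAlgebra.single g₂ 1) * D (MonoidAlgebra.single g₁ 1)) :
    IsSigmaTauDerivation σ τ D := by
  have key : (LinearMap.mul ℂ (MonoidAlgebra ℂ G)).compr₂ D
      = (LinearMap.mul ℂ (MonoidAlgebra ℂ G)).compl₁₂ D (algExt τ).toLinearMap
        + (LinearMap.mul ℂ (MonoidAlgebra ℂ G)).compl₁₂ (algExt σ).toLinearMap D := by
    ext g₂ g₁
    exact DFunLike.congr_fun (congrArg MonoidAlgebra.coeff (by simpa using h g₂ g₁)) _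
  intro a b
  simpa using congrArg (fun f => f b) (congrArg (fun f => f a) key)

/-- The derivation associated with a locally finite character. -/
noncomputable def Dchi {G : Type*} [Group G] (χ : G × G → ℂ)
    (hfin : ∀ g : G, {h : G | χ (h, g) ≠ 0}.Finite) :
    MonoidAlgebra ℂ G →ₗ[ℂ] MonoidAlgebra ℂ G :=
  (MonoidAlgebra.coeffLinearEquiv ℂ).symm.toLinearMap ∘ₗ
  Finsupp.lsum ℂ (fun g => (LinearMap.id : ℂ →ₗ[ℂ] ℂ).smulRight
    (⟨(hfin g).toFinset, fun h => χ (h, g), fun h => by simp⟩ : G →₀ ℂ))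
    ∘ₗ (MonoidAlgebra.coeffLinearEquiv ℂ).toLinearMap

lemma Dchi_single {G : Type*} [Group G] (χ : G × G → ℂ)
    (hfin : ∀ g : G, {h : G | χ (h, g) ≠ 0}.Finite) (g h : G) :
    (Dchi χ hfin (MonoidAlgebra.single g 1)).coeff h = χ (h, g) := by
  classical
  unfold Dchi
  simp [MonoidAlgebra.coeff_single]

/-- `Ψ : D ↦ χ_D` is a ℂ-linear bijection from the space of
`(σ,τ)`-derivations of `ℂ[G]` onto the space of locally finite characters:
`Ψ` is additive and homogeneous, (i) every `χ_D` is a locally finite character, and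
(ii) every locally finite character is `χ_D` for exactly one `(σ,τ)`-derivation `D`. -/
theorem derivations_equiv_locally_finite_characters
    {G : Type*} [Group G] [Countable G] (σ τ : G →* G) :
    (∀ D D' : MonoidAlgebra ℂ G →ₗ[ℂ] MonoidAlgebra ℂ G, ∀ c : ℂ,
        chiOf (c • D + D') = c • chiOf D + chiOf D') ∧
    (∀ D : MonoidAlgebra ℂ G →ₗ[ℂ] MonoidAlgebra ℂ G, IsSigmaTauDerivation σ τ D →
        IsCharacter σ τ (chiOf D) ∧ IsLocallyFinite (chiOf D)) ∧
    (∀ χ : G × G → ℂ, IsCharacter σ τ χ → IsLocallyFinite χ →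
        ∃! D : MonoidAlgebra ℂ G →ₗ[ℂ] MonoidAlgebra ℂ G,
          IsSigmaTauDerivation σ τ D ∧ chiOf D = χ) := by
  classical
  refine ⟨?_, ?_, ?_⟩
  · -- linearity
    intro D D' c
    funext p
    simp only [chiOf, LinearMap.add_apply, LinearMap.smul_apply, Pi.add_apply, Pi.smul_apply,
      smul_eq_mul]
    rw [MonoidAlgebra.coeff_add, MonoidAlgebra.coeff_smul, Finsupp.add_apply, Finsupp.smul_apply]
    rfl
  · -- (i)
    intro D hD
    constructor
    · intro h g₁ g₂
      have h1 : (MonoidAlgebra.single (g₂ * g₁) (1:ℂ) : MonoidAlgebra ℂ G)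
          = MonoidAlgebra.single g₂ 1 * MonoidAlgebra.single g₁ 1 := by
        simp [MonoidAlgebra.single_mul_single]
      simp only [chiOf, MonoidAlgebra.of_apply]
      rw [h1, hD, algExt_single, algExt_single]
      rw [MonoidAlgebra.coeff_add, Finsupp.add_apply, MonoidAlgebra.coeff_mul_single_apply, MonoidAlgebra.coeff_single_mul_apply]
      ring
    · intro g
      exact (D (MonoidAlgebra.of ℂ G g)).coeff.finite_support
  · -- (ii)
    intro χ hχ hfin
    refine ⟨Dchi χ hfin, ⟨?_, ?_⟩, ?_⟩
    · apply derivation_of_basis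
      intro g₂ g₁
      have h1 : (MonoidAlgebra.single g₂ (1:ℂ) : MonoidAlgebra ℂ G)
          * MonoidAlgebra.single g₁ 1 = MonoidAlgebra.single (g₂ * g₁) 1 := by
        simp [MonoidAlgebra.single_mul_single]
      rw [h1, algExt_single, algExt_single]
      ext h
      rw [Dchi_single χ hfin]
      rw [hχ h g₁ g₂, MonoidAlgebra.coeff_add, Finsupp.add_apply, MonoidAlgebra.coeff_mul_single_apply,
        MonoidAlgebra.coeff_single_mul_apply, Dchi_single χ hfin, Dchi_single χ hfin]
      ring
    · funext p
      simp only [chiOf, MonoidAlgebra.of_apply]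
      exact Dchi_single χ hfin p.2 p.1
    · rintro D' ⟨hD'der, hD'chi⟩
      refine MonoidAlgebra.lhom_ext' fun g => LinearMap.ext fun c => ?_
      change D' (MonoidAlgebra.single g c) = Dchi χ hfin (MonoidAlgebra.single g c)
      have hc : (MonoidAlgebra.single g c : MonoidAlgebra ℂ G)
          = c • MonoidAlgebra.single g 1 := by
        rw [MonoidAlgebra.smul_single', mul_one]
      rw [hc, map_smul, map_smul]
      congr 1
      ext h
      have h2 : (Dchi χ hfin (MonoidAlgebra.single g 1)).coeff h = χ (h, g) :=
        Dchi_single χ hfin g h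
      have h1 := congrFun hD'chi (h, g)
      simp only [chiOf, MonoidAlgebra.of_apply] at h1
      exact h1.trans h2.symm
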